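/- Let n ≥ 1 be an integer and a = 2/n. For every z > 0 and w ∈ [-1,1], with t = arccos w, one has K_{2/n}^2(z,w) = (1/n) ∑_{ℓ=0}^{n-1} e^{-i n z^{1/n} cos(t/n) cos(2πℓ/n)} · e^{i n z^{1/n} sin(t/n) sin(2πℓ/n)}. -/

import Mathlib

open scoped Real

/-- Bessel function of the first kind `J_ν(z)`, defined by its series. -/
noncomputable def besselJ (ν z : ℝ) : ℝ :=
  ∑' j : ℕ, ((-1 : ℝ) ^ j / (j.factorial * Real.Gamma ((j : ℝ) + ν + 1))) *
    (z / 2) ^ (2 * (j : ℝ) + ν)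


/-- The kernel `K_a^2(z,w)` of the radially deformed Fourier transform in dimension 2. -/
noncomputable def deformedKernel2 (a z w : ℝ) : ℂ :=
  ((besselJ 0 ((2 / a) * z ^ (a / 2)) : ℝ) : ℂ) +
    2 * ∑' k : ℕ, Complex.exp (-(Real.pi * ((k : ℝ) + 1) / a) * Complex.I) *
      ((besselJ (2 * ((k : ℝ) + 1) / a) ((2 / a) * z ^ (a / 2)) : ℝ) : ℂ) *
      ((Real.cos (((k : ℝ) + 1) * Real.arccos w) : ℝ) : ℂ)

/-- General term of the Jacobi–Anger type double series. -/
noncomputable def JAterm (r φ : ℝ) (x : ℤ × ℕ) : ℂ :=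
  (-Complex.I * r / 2) ^ (2 * x.2 + x.1.natAbs) /
      ((x.2.factorial : ℂ) * ((x.2 + x.1.natAbs).factorial : ℂ)) *
    Complex.exp (((x.1 : ℝ) * φ : ℝ) * Complex.I)

lemma norm_JAterm (r φ : ℝ) (hr : 0 ≤ r) (x : ℤ × ℕ) :
    ‖JAterm r φ x‖ = (r / 2) ^ (2 * x.2 + x.1.natAbs) /
      ((x.2.factorial : ℝ) * ((x.2 + x.1.natAbs).factorial : ℝ)) := by
  unfold JAterm
  rw [norm_mul, Complex.norm_exp_ofReal_mul_I, mul_one, norm_div, norm_pow]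
  have : ‖-Complex.I * (r:ℂ) / 2‖ = r / 2 := by
    simp [norm_div, norm_mul, Complex.norm_real, _root_.abs_of_nonneg hr]
  rw [this]
  rw [norm_mul]
  simp [Complex.norm_natCast]

lemma summable_JAterm (r φ : ℝ) (hr : 0 ≤ r) : Summable (JAterm r φ) := by
  rw [← summable_norm_iff]
  have hb : Summable (fun x : ℤ × ℕ =>
      ((r/2) ^ x.1.natAbs / (x.1.natAbs.factorial : ℝ)) * (((r/2)^2) ^ x.2 / (x.2.factorial : ℝ))) := by
    have h1 : Summable (fun m : ℤ => (r/2) ^ m.natAbs / (m.natAbs.factorial : ℝ)) := by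
      apply Summable.of_nat_of_neg <;>
        simpa using Real.summable_pow_div_factorial (r/2)
    have h2 := Real.summable_pow_div_factorial ((r/2)^2)
    exact h1.mul_of_nonneg h2 (fun m => by positivity) (fun j => by positivity)
  apply hb.of_nonneg_of_le (fun x => norm_nonneg _)
  intro x
  rw [norm_JAterm r φ hr]
  have h1 : (r/2) ^ (2 * x.2 + x.1.natAbs) = ((r/2)^2)^x.2 * (r/2)^x.1.natAbs := by
    rw [pow_add, pow_mul]
  have hfle : (x.1.natAbs.factorial : ℝ) * (x.2.factorial : ℝ) ≤
      ((x.2 + x.1.natAbs).factorial : ℝ) := by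
    exact_mod_cast Nat.le_of_dvd (Nat.factorial_pos _)
      (Nat.factorial_mul_factorial_dvd_factorial_add x.1.natAbs x.2) |>.trans_eq
      (by rw [Nat.add_comm])
  have hq : (0:ℝ) ≤ r/2 := by linarith
  have hrhs : (r/2) ^ x.1.natAbs / (x.1.natAbs.factorial : ℝ) * (((r/2)^2) ^ x.2 / (x.2.factorial : ℝ))
      = ((r/2)^2)^x.2 * (r/2)^x.1.natAbs / ((x.2.factorial : ℝ) * (x.1.natAbs.factorial : ℝ)) := by
    ring
  rw [h1, hrhs]
  gcongr
  exact Nat.le_add_left _ _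

lemma besselJ_natCast (m : ℕ) {r : ℝ} :
    besselJ m r = ∑' j : ℕ, ((-1:ℝ))^j / (j.factorial * (j+m).factorial) * (r/2)^(2*j+m) := by
  unfold besselJ
  congr 1
  funext j
  have hg : Real.Gamma ((j : ℝ) + m + 1) = ((j+m).factorial : ℝ) := by
    rw [show ((j:ℝ) + m + 1) = (((j+m : ℕ)):ℝ) + 1 by push_cast; ring,
      Real.Gamma_nat_eq_factorial]
  rw [hg, show (2*(j:ℝ) + m) = ((2*j+m : ℕ) : ℝ) by push_cast; ring, Real.rpow_natCast]

lemma tsum_JAterm (r φ : ℝ) (m : ℤ) :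
    ∑' j : ℕ, JAterm r φ (m, j) =
      (-Complex.I) ^ m.natAbs * ((besselJ m.natAbs r : ℝ) : ℂ) *
        Complex.exp (((m : ℝ) * φ : ℝ) * Complex.I) := by
  rw [besselJ_natCast]
  rw [Complex.ofReal_tsum]
  rw [← tsum_mul_left, ← tsum_mul_right]
  congr 1
  funext j
  unfold JAterm
  have hI : (-Complex.I * r / 2) ^ (2*j + m.natAbs)
      = (-1:ℂ)^j * (-Complex.I)^m.natAbs * ((r/2 : ℝ) : ℂ)^(2*j+m.natAbs) := by
    have : -Complex.I * r / 2 = (-Complex.I) * ((r/2 : ℝ) : ℂ) := by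
      push_cast; ring
    rw [this, mul_pow, pow_add, pow_mul]
    rw [show (-Complex.I)^2 = -1 by simp [pow_two]]
  rw [hI]
  push_cast
  ring

lemma ofReal_cos_eq (θ : ℝ) : ((Real.cos θ : ℝ) : ℂ) =
    (Complex.exp ((θ : ℝ) * Complex.I) + Complex.exp (((-θ : ℝ) : ℝ) * Complex.I)) / 2 := by
  rw [Complex.ofReal_cos, Complex.exp_mul_I, Complex.exp_mul_I]
  push_cast
  rw [Complex.cos_neg, Complex.sin_neg]
  ring

lemma kernel_side (n : ℕ) (hn : 1 ≤ n) (r φ : ℝ) (hr : 0 < r) :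
    ((besselJ 0 r : ℝ) : ℂ) + 2 * ∑' k : ℕ,
        (-Complex.I) ^ ((k+1)*n) * ((besselJ ((((k+1)*n : ℕ)) : ℝ) r : ℝ) : ℂ) *
          ((Real.cos ((((k+1)*n : ℕ) : ℝ) * φ) : ℝ) : ℂ)
      = ∑' m : ℤ, (if (n : ℤ) ∣ m then ∑' j : ℕ, JAterm r φ (m, j) else 0) := by
  have hS : Summable (JAterm r φ) := summable_JAterm r φ hr.le
  have hH : Summable (fun m : ℤ => ∑' j : ℕ, JAterm r φ (m, j)) := by
    have := hS.prod
    exact this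
  -- each kernel term equals H(M) + H(-M)
  have hterm : ∀ k : ℕ,
      2 * ((-Complex.I) ^ ((k+1)*n) * ((besselJ ((((k+1)*n : ℕ)) : ℝ) r : ℝ) : ℂ) *
        ((Real.cos ((((k+1)*n : ℕ) : ℝ) * φ) : ℝ) : ℂ))
      = (∑' j : ℕ, JAterm r φ (((k+1)*n : ℕ), j)) + ∑' j : ℕ, JAterm r φ (-(((k+1)*n : ℕ) : ℤ), j) := by
    intro k
    rw [tsum_JAterm, tsum_JAterm]
    have h1 : ((((k+1)*n : ℕ) : ℤ)).natAbs = (k+1)*n := Int.natAbs_natCast _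
    have h2 : ((-(((k+1)*n : ℕ) : ℤ))).natAbs = (k+1)*n := by
      rw [Int.natAbs_neg, Int.natAbs_natCast]
    rw [h1, h2, ofReal_cos_eq]
    push_cast
    ring
  set H : ℤ → ℂ := fun m => ∑' j : ℕ, JAterm r φ (m, j) with hHdef
  have hne : (n : ℤ) ≠ 0 := Int.natCast_ne_zero.mpr (by omega)
  have hSA : Summable (fun k : ℕ => H ((((k+1)*n : ℕ)) : ℤ)) := by
    apply hH.comp_injective
    intro a b hab
    have h1 : ((a+1)*n : ℕ) = ((b+1)*n : ℕ) := Nat.cast_injective hab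
    have h2 := Nat.eq_of_mul_eq_mul_right (by omega) h1
    omega
  have hSB : Summable (fun k : ℕ => H (-((((k+1)*n : ℕ)) : ℤ))) := by
    apply hH.comp_injective
    intro a b hab
    have h1 : ((a+1)*n : ℕ) = ((b+1)*n : ℕ) := Nat.cast_injective (neg_injective hab)
    have h2 := Nat.eq_of_mul_eq_mul_right (by omega) h1
    omega
  calc ((besselJ 0 r : ℝ) : ℂ) + 2 * ∑' k : ℕ,
        (-Complex.I) ^ ((k+1)*n) * ((besselJ ((((k+1)*n : ℕ)) : ℝ) r : ℝ) : ℂ) *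
          ((Real.cos ((((k+1)*n : ℕ) : ℝ) * φ) : ℝ) : ℂ)
      = H 0 + ∑' k : ℕ, (H ((((k+1)*n : ℕ)) : ℤ) + H (-((((k+1)*n : ℕ)) : ℤ))) := by
        rw [← tsum_mul_left, tsum_congr hterm]
        congr 1
        show ((besselJ 0 r : ℝ) : ℂ) = ∑' j : ℕ, JAterm r φ ((0 : ℤ), j)
        rw [tsum_JAterm r φ 0]
        norm_num
    _ = ∑' k : ℤ, H (k * n) := by
        rw [tsum_of_add_one_of_neg_add_one (f := fun k : ℤ => H (k * n))]
        · rw [Summable.tsum_add hSA hSB]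
          have e1 : ∀ k : ℕ, ((k : ℤ) + 1) * n = ((((k+1)*n : ℕ)) : ℤ) := by
            intro k; push_cast; ring
          have e2 : ∀ k : ℕ, (-((k : ℤ) + 1)) * n = -((((k+1)*n : ℕ)) : ℤ) := by
            intro k; push_cast; ring
          simp only [e1, e2, zero_mul]
          ring
        · refine hSA.congr fun k => ?_
          congr 2
        · refine hSB.congr fun k => ?_
          congr 2
    _ = ∑' m : ℤ, (if (n : ℤ) ∣ m then H m else 0) := by
        have hinj : Function.Injective (fun k : ℤ => k * n) := fun a b h =>
          mul_right_cancel₀ hne h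
        have hsupp : Function.support (fun m : ℤ => if (n : ℤ) ∣ m then H m else 0) ⊆
            Set.range (fun k : ℤ => k * n) := by
          intro m hm
          by_cases hd : (n : ℤ) ∣ m
          · obtain ⟨c, hc⟩ := hd
            exact ⟨c, by rw [hc]; ring⟩
          · simp [hd] at hm
        rw [← Function.Injective.tsum_eq hinj hsupp]
        apply tsum_congr
        intro k
        exact (if_pos ⟨k, by ring⟩).symm

/-- Term indexed by `(p, s)`: coefficient of the binomially expanded exponential series. -/
noncomputable def JBterm (r φ : ℝ) (n : ℕ) (y : ℕ × ℕ) : ℂ :=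
  if y.2 ≤ y.1 ∧ (n : ℤ) ∣ (2 * (y.2 : ℤ) - y.1) then
    (-Complex.I * r / 2) ^ y.1 / ((y.2.factorial : ℂ) * ((y.1 - y.2).factorial : ℂ)) *
      Complex.exp ((((2 * (y.2 : ℤ) - y.1 : ℤ) : ℝ) * φ : ℝ) * Complex.I)
  else 0

/-- The index bijection between `(m, j)` and `(p, s)`. -/
def JAbij (x : ℤ × ℕ) : ℕ × ℕ := (2 * x.2 + x.1.natAbs, x.2 + x.1.toNat)

lemma JAbij_inj : Function.Injective JAbij := by
  intro a b h
  rw [Prod.ext_iff] at h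
  obtain ⟨h1, h2⟩ := h
  simp only [JAbij] at h1 h2
  rw [Prod.ext_iff]
  constructor <;> omega

lemma JAbij_supp (r φ : ℝ) (n : ℕ) :
    Function.support (JBterm r φ n) ⊆ Set.range JAbij := by
  intro y hy
  have hcond : y.2 ≤ y.1 ∧ (n : ℤ) ∣ (2 * (y.2 : ℤ) - y.1) := by
    by_contra hc
    exact hy (if_neg hc)
  refine ⟨(2 * (y.2 : ℤ) - y.1, min y.2 (y.1 - y.2)), ?_⟩
  rw [Prod.ext_iff]
  simp only [JAbij]
  constructor <;> omega

lemma JBterm_JAbij (r φ : ℝ) (n : ℕ) (x : ℤ × ℕ) :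
    JBterm r φ n (JAbij x) = if (n : ℤ) ∣ x.1 then JAterm r φ x else 0 := by
  obtain ⟨m, j⟩ := x
  simp only [JAbij, JBterm, JAterm]
  have hm : 2 * ((j + m.toNat : ℕ) : ℤ) - ((2 * j + m.natAbs : ℕ) : ℤ) = m := by
    omega
  have hle : j + m.toNat ≤ 2 * j + m.natAbs := by omega
  simp only [hm]
  by_cases hd : (n : ℤ) ∣ m
  · rw [if_pos ⟨hle, hd⟩, if_pos hd]
    congr 1
    rcases le_or_gt 0 m with hm0 | hm0
    · have ht : m.toNat = m.natAbs := by omega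
      rw [ht, show 2 * j + m.natAbs - (j + m.natAbs) = j by omega]
      rw [mul_comm ((j.factorial : ℂ)) _]
    · have ht : m.toNat = 0 := by omega
      rw [ht, show 2 * j + m.natAbs - (j + 0) = j + m.natAbs by omega]
      norm_num
  · rw [if_neg (by tauto), if_neg hd]

lemma summable_Fterm (r φ : ℝ) (hr : 0 ≤ r) (n : ℕ) :
    Summable (fun x : ℤ × ℕ => if (n : ℤ) ∣ x.1 then JAterm r φ x else 0) := by
  refine ((summable_JAterm r φ hr).indicator {x | (n : ℤ) ∣ x.1}).congr fun x => ?_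
  rw [Set.indicator_apply]
  rfl

lemma tsum_Fterm (r φ : ℝ) (hr : 0 < r) (n : ℕ) :
    ∑' m : ℤ, (if (n : ℤ) ∣ m then ∑' j : ℕ, JAterm r φ (m, j) else 0)
      = ∑' y : ℕ × ℕ, JBterm r φ n y := by
  have hF := summable_Fterm r φ hr.le n
  calc ∑' m : ℤ, (if (n : ℤ) ∣ m then ∑' j : ℕ, JAterm r φ (m, j) else 0)
      = ∑' m : ℤ, ∑' j : ℕ, (if (n : ℤ) ∣ m then JAterm r φ (m, j) else 0) := by
        refine tsum_congr fun m => ?_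
        by_cases hd : (n : ℤ) ∣ m
        · simp only [if_pos hd]
        · simp only [if_neg hd, tsum_zero]
    _ = ∑' x : ℤ × ℕ, (if (n : ℤ) ∣ x.1 then JAterm r φ x else 0) := (Summable.tsum_prod hF).symm
    _ = ∑' y : ℕ × ℕ, JBterm r φ n y :=
        (tsum_congr fun x => (JBterm_JAbij r φ n x).symm).trans
          (Function.Injective.tsum_eq JAbij_inj (JAbij_supp r φ n))

lemma summable_JBterm (r φ : ℝ) (hr : 0 ≤ r) (n : ℕ) :
    Summable (JBterm r φ n) := by
  refine (Function.Injective.summable_iff JAbij_inj (fun y hy =>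
    Function.notMem_support.mp fun hsupp => hy (JAbij_supp r φ n hsupp))).mp ?_
  exact (summable_Fterm r φ hr n).congr fun x => (JBterm_JAbij r φ n x).symm

lemma tsum_JBterm_eq (r φ : ℝ) (hr : 0 < r) (n : ℕ) :
    ∑' y : ℕ × ℕ, JBterm r φ n y
      = ∑' p : ℕ, ∑ s ∈ Finset.range (p + 1), JBterm r φ n (p, s) := by
  rw [Summable.tsum_prod (summable_JBterm r φ hr.le n)]
  refine tsum_congr fun p => ?_
  refine tsum_eq_sum fun s hs => ?_
  have : ¬ (s ≤ p) := by
    simp only [Finset.mem_range] at hs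
    omega
  exact if_neg (by tauto)

lemma avg_exp_sum (n : ℕ) (hn : 1 ≤ n) (m : ℤ) (φ : ℝ) :
    ∑ l ∈ Finset.range n, Complex.exp ((((m : ℝ) * (φ + 2 * Real.pi * l / n) : ℝ)) * Complex.I)
      = if (n : ℤ) ∣ m then (n : ℂ) * Complex.exp ((((m : ℝ) * φ : ℝ)) * Complex.I) else 0 := by
  have hn0 : (n : ℝ) ≠ 0 := by positivity
  have hnc : (n : ℂ) ≠ 0 := by exact_mod_cast Nat.cast_ne_zero.mpr (by omega)
  set ζ : ℂ := Complex.exp (((2 * Real.pi * m / n : ℝ)) * Complex.I) with hζdef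
  have hterm : ∀ l ∈ Finset.range n,
      Complex.exp ((((m : ℝ) * (φ + 2 * Real.pi * l / n) : ℝ)) * Complex.I)
        = Complex.exp ((((m : ℝ) * φ : ℝ)) * Complex.I) * ζ ^ l := by
    intro l _
    rw [hζdef, ← Complex.exp_nat_mul, ← Complex.exp_add]
    congr 1
    push_cast
    ring
  rw [Finset.sum_congr rfl hterm, ← Finset.mul_sum]
  have hζn : ζ ^ n = 1 := by
    rw [hζdef, ← Complex.exp_nat_mul]
    rw [show (n : ℂ) * (((2 * Real.pi * m / n : ℝ)) * Complex.I) = (m : ℂ) * (2 * Real.pi * Complex.I) by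
      push_cast; field_simp]
    exact Complex.exp_int_mul_two_pi_mul_I m
  by_cases hd : (n : ℤ) ∣ m
  · obtain ⟨c, hc⟩ := hd
    have hζ1 : ζ = 1 := by
      rw [hζdef, show ((2 * Real.pi * m / n : ℝ) : ℂ) * Complex.I = (c : ℂ) * (2 * Real.pi * Complex.I) by
        rw [hc]; push_cast; field_simp]

      exact Complex.exp_int_mul_two_pi_mul_I c
    rw [if_pos ⟨c, hc⟩, hζ1]
    simp [Finset.sum_const, mul_comm]
  · have hζ1 : ζ ≠ 1 := by
      intro h
      rw [hζdef, Complex.exp_eq_one_iff] at h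
      obtain ⟨k, hk⟩ := h
      apply hd
      have hI : ((2 * Real.pi * m / n : ℝ) : ℂ) = (k : ℂ) * (2 * Real.pi) := by
        have h2 : ((2 * Real.pi * m / n : ℝ) : ℂ) * Complex.I = ((k : ℂ) * (2 * Real.pi)) * Complex.I :=
          hk.trans (by ring)
        exact mul_right_cancel₀ Complex.I_ne_zero h2
      have hre : (2 * Real.pi * m / n : ℝ) = (k : ℝ) * (2 * Real.pi) := by
        exact_mod_cast hI
      have hπ : Real.pi ≠ 0 := Real.pi_ne_zero
      have hre2 : (m : ℝ) * (2 * Real.pi) = ((k * (n : ℤ) : ℤ) : ℝ) * (2 * Real.pi) := by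
        push_cast
        field_simp at hre
        nlinarith [hre, Real.pi_pos]
      have : (m : ℝ) = ((k * (n : ℤ) : ℤ) : ℝ) :=
        mul_right_cancel₀ (by positivity) hre2
      have hmk : m = k * (n : ℤ) := by exact_mod_cast this
      exact ⟨k, by rw [hmk]; ring⟩
    rw [geom_sum_eq hζ1, hζn]
    simp [if_neg hd]

lemma pow_term_expand (r ψ : ℝ) (p : ℕ) :
    (((-(r * Real.cos ψ) : ℝ) : ℂ) * Complex.I) ^ p / (p.factorial : ℂ)
      = ∑ s ∈ Finset.range (p + 1),
          (-Complex.I * r / 2) ^ p / ((s.factorial : ℂ) * ((p - s).factorial : ℂ)) *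
            Complex.exp ((((2 * (s : ℤ) - (p : ℤ) : ℤ) : ℝ) * ψ : ℝ) * Complex.I) := by
  have hx : (((-(r * Real.cos ψ) : ℝ) : ℂ) * Complex.I)
      = (-Complex.I * r / 2) * (Complex.exp ((ψ : ℝ) * Complex.I) +
          Complex.exp (((-ψ : ℝ) : ℝ) * Complex.I)) := by
    rw [Complex.ofReal_neg, Complex.ofReal_mul, ofReal_cos_eq]
    ring
  rw [hx, mul_pow, add_pow, Finset.mul_sum, Finset.sum_div]
  refine Finset.sum_congr rfl fun s hs => ?_
  have hs' : s ≤ p := by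
    simp only [Finset.mem_range] at hs
    omega
  have hv : Complex.exp ((ψ : ℝ) * Complex.I) ^ s *
      Complex.exp (((-ψ : ℝ) : ℝ) * Complex.I) ^ (p - s)
      = Complex.exp ((((2 * (s : ℤ) - (p : ℤ) : ℤ) : ℝ) * ψ : ℝ) * Complex.I) := by
    rw [← Complex.exp_nat_mul, ← Complex.exp_nat_mul, ← Complex.exp_add]
    congr 1
    push_cast [Nat.cast_sub hs']
    ring
  rw [hv]
  set E := Complex.exp ((((2 * (s : ℤ) - (p : ℤ) : ℤ) : ℝ) * ψ : ℝ) * Complex.I) with hE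
  have hfac : ((p.choose s : ℂ)) * (s.factorial : ℂ) * ((p - s).factorial : ℂ)
      = (p.factorial : ℂ) := by
    exact_mod_cast congrArg (Nat.cast : ℕ → ℂ)
      (Nat.choose_mul_factorial_mul_factorial hs')
  have h1 : (s.factorial : ℂ) ≠ 0 := Nat.cast_ne_zero.mpr (Nat.factorial_ne_zero s)
  have h2 : ((p - s).factorial : ℂ) ≠ 0 := Nat.cast_ne_zero.mpr (Nat.factorial_ne_zero _)
  have h3 : (p.factorial : ℂ) ≠ 0 := Nat.cast_ne_zero.mpr (Nat.factorial_ne_zero p)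
  field_simp
  linear_combination Complex.I ^ p * (r : ℂ) ^ p * E * (-1/2 : ℂ) ^ p * hfac

lemma rhs_side (n : ℕ) (hn : 1 ≤ n) (r φ : ℝ) :
    (1 / (n : ℂ)) * ∑ l ∈ Finset.range n,
        Complex.exp (((-(r * Real.cos (φ + 2 * Real.pi * l / n)) : ℝ)) * Complex.I)
      = ∑' p : ℕ, ∑ s ∈ Finset.range (p + 1), JBterm r φ n (p, s) := by
  have hnc : (n : ℂ) ≠ 0 := Nat.cast_ne_zero.mpr (by omega)
  have hexp : ∀ x : ℝ, Complex.exp ((x : ℝ) * Complex.I)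
      = ∑' p : ℕ, ((x : ℂ) * Complex.I) ^ p / (p.factorial : ℂ) := by
    intro x
    rw [Complex.exp_eq_exp_ℂ, NormedSpace.exp_eq_tsum_div]
  have hsummable : ∀ l ∈ Finset.range n, Summable (fun p : ℕ =>
      (((-(r * Real.cos (φ + 2 * Real.pi * l / n)) : ℝ) : ℂ) * Complex.I) ^ p /
        (p.factorial : ℂ)) := by
    intro l _
    exact NormedSpace.expSeries_div_summable _
  calc (1 / (n : ℂ)) * ∑ l ∈ Finset.range n,
        Complex.exp (((-(r * Real.cos (φ + 2 * Real.pi * l / n)) : ℝ)) * Complex.I)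
      = (1 / (n : ℂ)) * ∑ l ∈ Finset.range n, ∑' p : ℕ,
          (((-(r * Real.cos (φ + 2 * Real.pi * l / n)) : ℝ) : ℂ) * Complex.I) ^ p /
            (p.factorial : ℂ) := by
        congr 1
        exact Finset.sum_congr rfl fun l _ => hexp _
    _ = (1 / (n : ℂ)) * ∑' p : ℕ, ∑ l ∈ Finset.range n,
          (((-(r * Real.cos (φ + 2 * Real.pi * l / n)) : ℝ) : ℂ) * Complex.I) ^ p /
            (p.factorial : ℂ) := by
        rw [Summable.tsum_finsetSum hsummable]
    _ = ∑' p : ℕ, (1 / (n : ℂ)) * ∑ l ∈ Finset.range n,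
          ∑ s ∈ Finset.range (p + 1),
            (-Complex.I * r / 2) ^ p / ((s.factorial : ℂ) * ((p - s).factorial : ℂ)) *
              Complex.exp ((((2 * (s : ℤ) - (p : ℤ) : ℤ) : ℝ) * (φ + 2 * Real.pi * l / n) : ℝ)
                * Complex.I) := by
        rw [← tsum_mul_left]
        refine tsum_congr fun p => ?_
        congr 1
        exact Finset.sum_congr rfl fun l _ => pow_term_expand r _ p
    _ = ∑' p : ℕ, ∑ s ∈ Finset.range (p + 1), JBterm r φ n (p, s) := by
        refine tsum_congr fun p => ?_
        rw [Finset.sum_comm, Finset.mul_sum]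
        refine Finset.sum_congr rfl fun s hs => ?_
        have hs' : s ≤ p := by
          simp only [Finset.mem_range] at hs; omega
        rw [← Finset.mul_sum, avg_exp_sum n hn (2 * (s : ℤ) - (p : ℤ)) φ]
        unfold JBterm
        simp only []
        by_cases hd : (n : ℤ) ∣ (2 * (s : ℤ) - (p : ℤ))
        · rw [if_pos hd, if_pos ⟨hs', hd⟩]
          set A := (-Complex.I * (r : ℂ) / 2) ^ p / ((s.factorial : ℂ) * ((p - s).factorial : ℂ))
          set E := Complex.exp ((((2 * (s : ℤ) - (p : ℤ) : ℤ) : ℝ) * φ : ℝ) * Complex.I)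
          rw [show (1 / (n : ℂ)) * (A * ((n : ℂ) * E)) = ((n : ℂ) / (n : ℂ)) * (A * E) by ring,
            div_self hnc, one_mul]
        · rw [if_neg hd, if_neg (by tauto)]
          simp

lemma negI_pow (M : ℕ) :
    (-Complex.I) ^ M = Complex.exp (((-(Real.pi * M / 2) : ℝ)) * Complex.I) := by
  have h : -Complex.I = Complex.exp (((-(Real.pi / 2) : ℝ)) * Complex.I) := by
    rw [Complex.exp_mul_I]
    push_cast
    rw [Complex.cos_neg, Complex.sin_neg]
    simp [Complex.cos_pi_div_two, Complex.sin_pi_div_two]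
  rw [h, ← Complex.exp_nat_mul]
  congr 1
  push_cast
  ring

/-- Closed formula for the two-dimensional kernel when `a = 2/n`. -/
theorem kernel_dim_two_closed_formula (n : ℕ) (hn : 1 ≤ n) (z : ℝ) (hz : 0 < z)
    (w : ℝ) (hw : w ∈ Set.Icc (-1 : ℝ) 1) :
    deformedKernel2 (2 / (n : ℝ)) z w =
      (1 / (n : ℂ)) * ∑ l ∈ Finset.range n,
        Complex.exp (-(((n : ℝ) * z ^ ((1 : ℝ) / (n : ℝ)) * Real.cos (Real.arccos w / (n : ℝ)) *
            Real.cos (2 * Real.pi * (l : ℝ) / (n : ℝ)) : ℝ) : ℂ) * Complex.I) *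
        Complex.exp ((((n : ℝ) * z ^ ((1 : ℝ) / (n : ℝ)) * Real.sin (Real.arccos w / (n : ℝ)) *
            Real.sin (2 * Real.pi * (l : ℝ) / (n : ℝ)) : ℝ) : ℂ) * Complex.I) := by
  have hn0 : (n : ℝ) ≠ 0 := by positivity
  set r : ℝ := (n : ℝ) * z ^ ((1 : ℝ) / (n : ℝ)) with hrdef
  set φ : ℝ := Real.arccos w / (n : ℝ) with hφdef
  have hr : 0 < r := mul_pos (by exact_mod_cast Nat.pos_of_ne_zero (by omega))
    (Real.rpow_pos_of_pos hz _)
  have h1 : deformedKernel2 (2 / (n : ℝ)) z w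
      = ((besselJ 0 r : ℝ) : ℂ) + 2 * ∑' k : ℕ,
          (-Complex.I) ^ ((k+1)*n) * ((besselJ ((((k+1)*n : ℕ)) : ℝ) r : ℝ) : ℂ) *
            ((Real.cos ((((k+1)*n : ℕ) : ℝ) * φ) : ℝ) : ℂ) := by
    unfold deformedKernel2
    have harg : (2 / (2 / (n : ℝ))) * z ^ ((2 / (n : ℝ)) / 2) = r := by
      rw [hrdef]
      congr 1
      · field_simp
      · congr 1
        field_simp
    rw [harg]
    congr 1
    congr 1
    refine tsum_congr fun k => ?_
    congr 1
    · congr 1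
      · rw [negI_pow ((k+1)*n)]
        congr 1
        push_cast
        field_simp
      · congr 2
        push_cast
        field_simp
    · congr 2
      rw [hφdef]
      push_cast
      field_simp
  rw [h1, kernel_side n hn r φ hr, tsum_Fterm r φ hr n, tsum_JBterm_eq r φ hr n,
    ← rhs_side n hn r φ]
  congr 1
  refine Finset.sum_congr rfl fun l _ => ?_
  rw [← Complex.exp_add]
  congr 1
  push_cast
  rw [Complex.cos_add]
  ring
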